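/- Let ℓ ∈ ℕ and m ∈ {0,…,ℓ}. Let A ⊆ ℝ^ℓ be countably m-rectifiable and let B ⊆ ℝ^ℓ be (ℓ−m)-negligible. Then there exists a vector v₀ ∈ ℝ^ℓ such that the set {t ∈ ℝ : (A + t·v₀) ∩ B ≠ ∅} has one-dimensional Lebesgue measure zero. -/

import Mathlib

open Set MeasureTheory
open scoped ENNReal NNReal Topology

/-- A subset `A` of a metric space is countably `m`-rectifiable iff it is the union of the
images of countably many Lipschitz maps, each defined on some subset of `ℝ^m`. -/
def CountablyRectifiable (m : ℕ) {X : Type*} [MetricSpace X] (A : Set X) : Prop :=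
  ∃ (S : ℕ → Set (EuclideanSpace ℝ (Fin m))) (f : ∀ i, S i → X) (C : ℕ → NNReal),
    (∀ i, LipschitzWith (C i) (f i)) ∧ A = ⋃ i, Set.range (f i)

private lemma coord_abs_le_norm {m : ℕ} (x : EuclideanSpace ℝ (Fin m)) (k : Fin m) :
    |x k| ≤ ‖x‖ := by
  rw [EuclideanSpace.norm_eq, ← Real.sqrt_sq_eq_abs]
  apply Real.sqrt_le_sqrt
  have := Finset.single_le_sum (f := fun i => ‖x i‖ ^ 2) (fun i _ => sq_nonneg _)
    (Finset.mem_univ k)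
  simpa [Real.norm_eq_abs, sq_abs] using this

private lemma norm_le_sqrt_mul {m : ℕ} (x : EuclideanSpace ℝ (Fin m)) {d : ℝ} (hd : 0 ≤ d)
    (h : ∀ k, |x k| ≤ d) : ‖x‖ ≤ Real.sqrt m * d := by
  rw [EuclideanSpace.norm_eq]
  have h1 : ∑ i, ‖x i‖ ^ 2 ≤ (m : ℝ) * d ^ 2 := by
    calc ∑ i, ‖x i‖ ^ 2 ≤ ∑ _i : Fin m, d ^ 2 := by
          refine Finset.sum_le_sum fun i _ => ?_
          rw [Real.norm_eq_abs]
          exact pow_le_pow_left₀ (abs_nonneg _) (h i) 2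
      _ = (m : ℝ) * d ^ 2 := by simp [Finset.sum_const]
  refine le_trans (Real.sqrt_le_sqrt h1) ?_
  rw [Real.sqrt_mul (Nat.cast_nonneg m), Real.sqrt_sq hd]

private lemma exists_cover {X : Type*} [MetricSpace X] [MeasurableSpace X] [BorelSpace X]
    (d : ℝ) {B : Set X} (hB : μH[d] B = 0) {ε : ℝ≥0∞} (hε : 0 < ε) :
    ∃ t : ℕ → Set X, (B ⊆ ⋃ n, t n) ∧ (∀ n, EMetric.diam (t n) ≤ 1) ∧
      ∑' n, ⨆ _ : (t n).Nonempty, EMetric.diam (t n) ^ d < ε := by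
  have h : (⨅ (t : ℕ → Set X) (_ : B ⊆ ⋃ n, t n) (_ : ∀ n, EMetric.diam (t n) ≤ 1),
      ∑' n, ⨆ _ : (t n).Nonempty, EMetric.diam (t n) ^ d) < ε := by
    refine lt_of_le_of_lt ?_ (lt_of_le_of_lt hB.le hε)
    rw [Measure.hausdorffMeasure_apply]
    exact le_iSup_of_le 1 (le_iSup_of_le one_pos le_rfl)
  rw [iInf_lt_iff] at h
  obtain ⟨t, h⟩ := h
  rw [iInf_lt_iff] at h
  obtain ⟨h1, h⟩ := h
  rw [iInf_lt_iff] at h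
  obtain ⟨h2, h3⟩ := h
  exact ⟨t, h1, h2, h3⟩

private lemma piece_bound {m ℓ : ℕ} (hml : m ≤ ℓ) {C : ℝ≥0} {S : Set (EuclideanSpace ℝ (Fin m))}
    {f : S → EuclideanSpace ℝ (Fin ℓ)} (hf : LipschitzWith C f) {R : ℝ} (hR : 0 ≤ R)
    (E : Set (EuclideanSpace ℝ (Fin ℓ))) {d : ℝ} (hd0 : 0 < d) (hd1 : d ≤ 1)
    (hE : ∀ b ∈ E, ∀ b' ∈ E, dist b b' ≤ d) :
    volume {y : EuclideanSpace ℝ (Fin ℓ) |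
        ∃ x : S, ‖(x : EuclideanSpace ℝ (Fin m))‖ ≤ R ∧ ∃ b ∈ E, y = b - f x} ≤
      ENNReal.ofReal ((2 * R + 5) ^ m * (1 + (C : ℝ) * Real.sqrt m) ^ ℓ * d ^ (ℓ - m)) *
        volume (Metric.ball (0 : EuclideanSpace ℝ (Fin ℓ)) 1) := by
  set c₁ : ℝ := 1 + (C : ℝ) * Real.sqrt m with hc₁def
  have hc₁ : 1 ≤ c₁ := le_add_of_nonneg_right (by positivity)
  have hc₁0 : 0 ≤ c₁ := zero_le_one.trans hc₁
  set M : ℕ := ⌈R / d⌉₊ with hMdef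
  set Z : Finset (Fin m → ℤ) := Fintype.piFinset fun _ => Finset.Icc (-(M : ℤ) - 1) ((M : ℤ) + 1)
    with hZdef
  set g : EuclideanSpace ℝ (Fin m) → Fin m → ℤ := fun x k => ⌊x k / d⌋ with hgdef
  set D : (Fin m → ℤ) → Set (EuclideanSpace ℝ (Fin ℓ)) := fun z =>
    {y | ∃ x : S, ‖(x : EuclideanSpace ℝ (Fin m))‖ ≤ R ∧ g (x : EuclideanSpace ℝ (Fin m)) = z ∧
      ∃ b ∈ E, y = b - f x} with hDdef
  have hRdM : R / d ≤ M := Nat.le_ceil _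
  have hdist_same_cell : ∀ (x x' : EuclideanSpace ℝ (Fin m)), g x = g x' → ‖x - x'‖ ≤ Real.sqrt m * d := by
    intro x x' hgg
    refine norm_le_sqrt_mul _ hd0.le fun k => ?_
    have e1 : (⌊x k / d⌋ : ℝ) ≤ x k / d := Int.floor_le _
    have e2 : x k / d < ⌊x k / d⌋ + 1 := Int.lt_floor_add_one _
    have e3 : (⌊x' k / d⌋ : ℝ) ≤ x' k / d := Int.floor_le _
    have e4 : x' k / d < ⌊x' k / d⌋ + 1 := Int.lt_floor_add_one _
    have hk : ⌊x k / d⌋ = ⌊x' k / d⌋ := congrFun hgg k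
    rw [hk] at e1 e2
    have f1 : (⌊x' k / d⌋ : ℝ) * d ≤ x k := by rwa [← le_div_iff₀ hd0]
    have f2 : x k < ((⌊x' k / d⌋ : ℝ) + 1) * d := by rwa [← div_lt_iff₀ hd0]
    have f3 : (⌊x' k / d⌋ : ℝ) * d ≤ x' k := by rwa [← le_div_iff₀ hd0]
    have f4 : x' k < ((⌊x' k / d⌋ : ℝ) + 1) * d := by rwa [← div_lt_iff₀ hd0]
    have : (x - x') k = x k - x' k := by simp
    rw [this, abs_le]
    constructor <;> nlinarith
  -- covering
  have hcover : {y : EuclideanSpace ℝ (Fin ℓ) |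
      ∃ x : S, ‖(x : EuclideanSpace ℝ (Fin m))‖ ≤ R ∧ ∃ b ∈ E, y = b - f x} ⊆
      ⋃ z ∈ Z, D z := by
    rintro y ⟨x, hx, b, hb, rfl⟩
    have hgZ : g (x : EuclideanSpace ℝ (Fin m)) ∈ Z := by
      rw [hZdef, Fintype.mem_piFinset]
      intro k
      rw [Finset.mem_Icc]
      have hxk : |(x : EuclideanSpace ℝ (Fin m)) k| ≤ R := (coord_abs_le_norm _ k).trans hx
      have hxk' := abs_le.mp hxk
      have hdiv1 : -R / d ≤ (x : EuclideanSpace ℝ (Fin m)) k / d := by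
        gcongr
        exact hxk'.1
      have hdiv2 : (x : EuclideanSpace ℝ (Fin m)) k / d ≤ R / d := by
        gcongr
        exact hxk'.2
      constructor
      · refine Int.le_floor.mpr ?_
        push_cast
        have : -R / d = -(R / d) := by ring
        rw [this] at hdiv1
        linarith
      · have h5 : ((⌊(x : EuclideanSpace ℝ (Fin m)) k / d⌋ : ℤ) : ℝ) ≤ (M : ℝ) + 1 := by
          refine (Int.floor_le _).trans (hdiv2.trans ?_)
          linarith
        exact_mod_cast h5
    exact mem_biUnion hgZ ⟨x, hx, rfl, b, hb, rfl⟩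
  -- per-cell bound
  have hcell : ∀ z : Fin m → ℤ, volume (D z) ≤
      ENNReal.ofReal ((c₁ * d) ^ ℓ) * volume (Metric.ball (0 : EuclideanSpace ℝ (Fin ℓ)) 1) := by
    intro z
    rcases Set.eq_empty_or_nonempty (D z) with hDz | ⟨y₀, x₀, hx₀, hg₀, b₀, hb₀, hy₀⟩
    · simp [hDz]
    have hsub : D z ⊆ Metric.closedBall y₀ (c₁ * d) := by
      rintro y ⟨x, hx, hgx, b, hb, rfl⟩
      rw [Metric.mem_closedBall, hy₀]
      calc dist (b - f x) (b₀ - f x₀) ≤ dist b b₀ + dist (f x) (f x₀) := dist_sub_sub_le _ _ _ _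
        _ ≤ d + (C : ℝ) * dist x x₀ := by
            refine add_le_add (hE b hb b₀ hb₀) (hf.dist_le_mul x x₀)
        _ ≤ d + (C : ℝ) * (Real.sqrt m * d) := by
            refine add_le_add_right (mul_le_mul_of_nonneg_left ?_ C.coe_nonneg) _
            rw [Subtype.dist_eq, dist_eq_norm]
            exact hdist_same_cell _ _ (hgx.trans hg₀.symm)
        _ ≤ c₁ * d := by rw [hc₁def]; ring_nf; nlinarith [Real.sqrt_nonneg (m : ℝ)]
    refine (measure_mono hsub).trans ?_
    rw [Measure.addHaar_closedBall volume y₀ (by positivity)]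
    rw [finrank_euclideanSpace_fin]
  -- cardinality of the index set
  have hZcard : (Z.card : ℝ) = ((2 * M + 3 : ℕ) : ℝ) ^ m := by
    have h1 : (Finset.Icc (-(M : ℤ) - 1) ((M : ℤ) + 1)).card = 2 * M + 3 := by
      rw [Int.card_Icc]
      omega
    rw [hZdef, Fintype.card_piFinset]
    simp [h1]
  -- put everything together
  refine (measure_mono hcover).trans ((measure_biUnion_finset_le Z D).trans ?_)
  have hsum : ∑ z ∈ Z, volume (D z) ≤
      (Z.card : ℝ≥0∞) * (ENNReal.ofReal ((c₁ * d) ^ ℓ) *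
        volume (Metric.ball (0 : EuclideanSpace ℝ (Fin ℓ)) 1)) := by
    refine (Finset.sum_le_sum fun z _ => hcell z).trans ?_
    rw [Finset.sum_const, nsmul_eq_mul]
  refine hsum.trans ?_
  rw [← mul_assoc]
  refine mul_le_mul_left ?_ _
  have hcast : ((Z.card : ℕ) : ℝ≥0∞) = ENNReal.ofReal ((Z.card : ℕ) : ℝ) :=
    (ENNReal.ofReal_natCast _).symm
  rw [hcast, ← ENNReal.ofReal_mul (Nat.cast_nonneg _)]
  refine ENNReal.ofReal_le_ofReal ?_
  -- the real inequality
  have hM : (M : ℝ) < R / d + 1 := Nat.ceil_lt_add_one (by positivity)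
  have key1 : ((2 * M + 3 : ℕ) : ℝ) ≤ (2 * R + 5) / d := by
    have h2 : (2 * R + 5) / d = 2 * (R / d) + 5 / d := by
      rw [add_div]
      ring
    have h3 : (5 : ℝ) ≤ 5 / d := by
      rw [le_div_iff₀ hd0]
      linarith
    push_cast
    rw [h2]
    linarith
  have key2 : ((2 * M + 3 : ℕ) : ℝ) ^ m ≤ ((2 * R + 5) / d) ^ m :=
    pow_le_pow_left₀ (by positivity) key1 m
  calc (Z.card : ℝ) * (c₁ * d) ^ ℓ = ((2 * M + 3 : ℕ) : ℝ) ^ m * (c₁ * d) ^ ℓ := by rw [hZcard]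
    _ ≤ ((2 * R + 5) / d) ^ m * (c₁ * d) ^ ℓ := by
        exact mul_le_mul_of_nonneg_right key2 (by positivity)
    _ = (2 * R + 5) ^ m * c₁ ^ ℓ * d ^ (ℓ - m) := by
        rw [div_pow, mul_pow, pow_sub₀ d hd0.ne' hml]
        field_simp

private lemma sub_null {m ℓ : ℕ} (hml : m < ℓ) {C : ℝ≥0} {S : Set (EuclideanSpace ℝ (Fin m))}
    {f : S → EuclideanSpace ℝ (Fin ℓ)} (hf : LipschitzWith C f) {R : ℝ} (hR : 0 ≤ R)
    {B : Set (EuclideanSpace ℝ (Fin ℓ))} (hB : μH[((ℓ - m : ℕ) : ℝ)] B = 0) :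
    volume {y : EuclideanSpace ℝ (Fin ℓ) |
      ∃ x : S, ‖(x : EuclideanSpace ℝ (Fin m))‖ ≤ R ∧ ∃ b ∈ B, y = b - f x} = 0 := by
  set s : ℕ := ℓ - m with hsdef
  have hs1 : 1 ≤ s := by omega
  set K : ℝ := (2 * R + 5) ^ m * (1 + (C : ℝ) * Real.sqrt m) ^ ℓ with hK
  have hK0 : 0 ≤ K := by positivity
  set v₁ : ℝ≥0∞ := volume (Metric.ball (0 : EuclideanSpace ℝ (Fin ℓ)) 1) with hv₁
  have hv₁top : v₁ ≠ ∞ := by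
    rw [hv₁]
    exact measure_ball_lt_top.ne
  set K' : ℝ≥0∞ := ENNReal.ofReal K * v₁ with hK'
  have hK'top : K' ≠ ∞ := ENNReal.mul_ne_top ENNReal.ofReal_ne_top hv₁top
  -- the uniform piece estimate
  have hpiece : ∀ (E : Set (EuclideanSpace ℝ (Fin ℓ))) (d : ℝ), 0 < d → d ≤ 1 →
      (∀ b ∈ E, ∀ b' ∈ E, dist b b' ≤ d) →
      volume {y : EuclideanSpace ℝ (Fin ℓ) |
        ∃ x : S, ‖(x : EuclideanSpace ℝ (Fin m))‖ ≤ R ∧ ∃ b ∈ E, y = b - f x} ≤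
        ENNReal.ofReal (K * d ^ s) * v₁ := by
    intro E d hd0 hd1 hE
    have h := piece_bound hml.le hf hR E hd0 hd1 hE
    rw [hK, hsdef, hv₁]
    exact h
  refine le_antisymm ?_ (zero_le)
  refine ENNReal.le_of_forall_pos_le_add fun ε hε _ => ?_
  rw [zero_add]
  have hδ : (0 : ℝ≥0∞) < (ε : ℝ≥0∞) / (K' + 1) := by
    refine ENNReal.div_pos ?_ ?_
    · exact_mod_cast hε.ne'
    · exact ENNReal.add_ne_top.mpr ⟨hK'top, ENNReal.one_ne_top⟩
  obtain ⟨t, htB, htdiam, htsum⟩ := exists_cover ((ℓ - m : ℕ) : ℝ) hB hδ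
  set Dn : ℕ → Set (EuclideanSpace ℝ (Fin ℓ)) := fun n =>
    {y | ∃ x : S, ‖(x : EuclideanSpace ℝ (Fin m))‖ ≤ R ∧ ∃ b ∈ t n, y = b - f x} with hDn
  have hsubset : {y : EuclideanSpace ℝ (Fin ℓ) |
      ∃ x : S, ‖(x : EuclideanSpace ℝ (Fin m))‖ ≤ R ∧ ∃ b ∈ B, y = b - f x} ⊆ ⋃ n, Dn n := by
    rintro y ⟨x, hx, b, hb, rfl⟩
    obtain ⟨_, ⟨n, rfl⟩, hbn⟩ := htB hb
    exact mem_iUnion.mpr ⟨n, x, hx, b, hbn, rfl⟩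
  have hpern : ∀ n, volume (Dn n) ≤
      K' * ⨆ _ : (t n).Nonempty, EMetric.diam (t n) ^ ((ℓ - m : ℕ) : ℝ) := by
    intro n
    rcases Set.eq_empty_or_nonempty (t n) with hemp | hne
    · have : Dn n = ∅ := by
        rw [hDn]
        simp [hemp]
      simp [this]
    rw [iSup_pos hne]
    have hetop : EMetric.diam (t n) ≠ ∞ := (lt_of_le_of_lt (htdiam n) ENNReal.one_lt_top).ne
    rcases eq_or_ne (EMetric.diam (t n)) 0 with he0 | hepos
    · -- degenerate piece: diameter 0
      have hzero : volume (Dn n) = 0 := by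
        have hseq : ∀ j : ℕ, volume (Dn n) ≤
            ENNReal.ofReal (K * (1 / (j + 1))) * v₁ := by
          intro j
          have hj0 : (0 : ℝ) < 1 / ((j : ℝ) + 1) := by positivity
          have hj1 : (1 : ℝ) / ((j : ℝ) + 1) ≤ 1 := by
            rw [div_le_one (by positivity)]
            linarith [Nat.cast_nonneg (α := ℝ) j]
          have hdist : ∀ b ∈ t n, ∀ b' ∈ t n, dist b b' ≤ 1 / ((j : ℝ) + 1) := by
            intro b hb b' hb'
            have : edist b b' = 0 := le_antisymm (he0 ▸ EMetric.edist_le_diam_of_mem hb hb')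
              (zero_le)
            rw [dist_edist, this]
            simpa using hj0.le
          refine (hpiece (t n) _ hj0 hj1 hdist).trans ?_
          refine mul_le_mul_left (ENNReal.ofReal_le_ofReal ?_) _
          refine mul_le_mul_of_nonneg_left ?_ hK0
          simpa using pow_le_pow_of_le_one hj0.le hj1 hs1
        have htend : Filter.Tendsto (fun j : ℕ => ENNReal.ofReal (K * (1 / (j + 1))) * v₁)
            Filter.atTop (𝓝 0) := by
          have h1 : Filter.Tendsto (fun j : ℕ => K * (1 / ((j : ℝ) + 1))) Filter.atTop (𝓝 0) := by
            have := tendsto_one_div_add_atTop_nhds_zero_nat (𝕜 := ℝ)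
            simpa using this.const_mul K
          have h2 : Filter.Tendsto (fun j : ℕ => ENNReal.ofReal (K * (1 / (j + 1))))
              Filter.atTop (𝓝 0) := by
            have := (ENNReal.continuous_ofReal.tendsto 0).comp h1
            simpa [Function.comp_def] using this
          simpa using ENNReal.Tendsto.mul_const h2 (Or.inr hv₁top)
        exact le_antisymm (ge_of_tendsto' htend hseq) (zero_le)
      simp [hzero]
    · -- positive diameter
      set e := EMetric.diam (t n) with hedef
      set d : ℝ := e.toReal with hddef
      have hd0 : 0 < d := ENNReal.toReal_pos hepos hetop
      have hd1 : d ≤ 1 := by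
        have := ENNReal.toReal_mono ENNReal.one_ne_top (htdiam n)
        simpa using this
      have hdist : ∀ b ∈ t n, ∀ b' ∈ t n, dist b b' ≤ d := by
        intro b hb b' hb'
        rw [dist_edist]
        exact ENNReal.toReal_mono hetop (EMetric.edist_le_diam_of_mem hb hb')
      refine (hpiece (t n) d hd0 hd1 hdist).trans ?_
      have : ENNReal.ofReal (K * d ^ s) * v₁ = K' * ENNReal.ofReal (d ^ s) := by
        rw [ENNReal.ofReal_mul hK0, hK']
        ring
      rw [this]
      refine mul_le_mul_right ?_ _
      have : ENNReal.ofReal (d ^ s) = e ^ ((ℓ - m : ℕ) : ℝ) := by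
        rw [ENNReal.ofReal_pow hd0.le, hddef, ENNReal.ofReal_toReal hetop,
          ENNReal.rpow_natCast]
      rw [this]
  calc volume {y : EuclideanSpace ℝ (Fin ℓ) |
        ∃ x : S, ‖(x : EuclideanSpace ℝ (Fin m))‖ ≤ R ∧ ∃ b ∈ B, y = b - f x}
      ≤ ∑' n, volume (Dn n) := (measure_mono hsubset).trans (measure_iUnion_le _)
    _ ≤ ∑' n, K' * ⨆ _ : (t n).Nonempty, EMetric.diam (t n) ^ ((ℓ - m : ℕ) : ℝ) :=
        ENNReal.tsum_le_tsum hpern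
    _ = K' * ∑' n, ⨆ _ : (t n).Nonempty, EMetric.diam (t n) ^ ((ℓ - m : ℕ) : ℝ) :=
        ENNReal.tsum_mul_left
    _ ≤ K' * ((ε : ℝ≥0∞) / (K' + 1)) := mul_le_mul_right htsum.le _
    _ ≤ (K' + 1) * ((ε : ℝ≥0∞) / (K' + 1)) := mul_le_mul_left le_self_add _
    _ = (ε : ℝ≥0∞) := ENNReal.mul_div_cancel (by simp) (ENNReal.add_ne_top.mpr ⟨hK'top, ENNReal.one_ne_top⟩)

/-- **Instantaneous affine displaceability of small sets.**
If `A ⊆ ℝ^ℓ` is countably `m`-rectifiable and `B ⊆ ℝ^ℓ` is `(ℓ-m)`-negligible, then there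
is a vector `v₀` such that the set of times `t` for which `(A + t • v₀) ∩ B ≠ ∅` has
one-dimensional Lebesgue measure zero. -/
theorem affine_displaceability (ℓ m : ℕ) (hm : m ≤ ℓ)
    (A B : Set (EuclideanSpace ℝ (Fin ℓ)))
    (hA : CountablyRectifiable m A)
    (hB : μH[((ℓ - m : ℕ) : ℝ)] B = 0) :
    ∃ v₀ : EuclideanSpace ℝ (Fin ℓ),
      volume {t : ℝ | (((fun a => a + t • v₀) '' A) ∩ B).Nonempty} = 0 := by
  obtain ⟨S, f, C, hlip, hAeq⟩ := hA
  rcases hm.lt_or_eq with hml | rfl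
  · -- main case : m < ℓ
    set N : Set (EuclideanSpace ℝ (Fin ℓ)) := ⋃ i : ℕ, ⋃ R : ℕ,
      {y | ∃ x : S i, ‖(x : EuclideanSpace ℝ (Fin m))‖ ≤ (R : ℝ) ∧ ∃ b ∈ B, y = b - f i x}
      with hNdef
    have hN : volume N = 0 :=
      measure_iUnion_null fun i => measure_iUnion_null fun R =>
        sub_null hml (hlip i) (Nat.cast_nonneg R) hB
    set N' : Set (EuclideanSpace ℝ (Fin ℓ)) := toMeasurable volume N with hN'def
    have hN'0 : volume N' = 0 := by rwa [measure_toMeasurable]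
    have hN'meas : MeasurableSet N' := measurableSet_toMeasurable _ _
    set P : Set (ℝ × EuclideanSpace ℝ (Fin ℓ)) := {p | p.1 • p.2 ∈ N'} with hPdef
    have hPmeas : MeasurableSet P := by
      have h : Measurable fun p : ℝ × EuclideanSpace ℝ (Fin ℓ) => p.1 • p.2 :=
        measurable_fst.smul measurable_snd
      exact h hN'meas
    have h0ae : ∀ᵐ t : ℝ, t ≠ 0 := by
      refine ae_iff.mpr ?_
      have : {t : ℝ | ¬t ≠ 0} = {0} := by
        ext t; simp
      rw [this]
      exact measure_singleton 0
    have hPnull : (volume : Measure (ℝ × EuclideanSpace ℝ (Fin ℓ))) P = 0 := by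
      rw [Measure.volume_eq_prod]
      rw [Measure.measure_prod_null hPmeas]
      filter_upwards [h0ae] with t ht
      have hsec : Prod.mk t ⁻¹' P = (t • ·) ⁻¹' N' := rfl
      simp only [Pi.zero_apply, hsec]
      rw [Measure.addHaar_preimage_smul volume ht, hN'0, mul_zero]
    have hQnull : (volume : Measure (EuclideanSpace ℝ (Fin ℓ) × ℝ))
        {p : EuclideanSpace ℝ (Fin ℓ) × ℝ | p.2 • p.1 ∈ N'} = 0 := by
      rw [Measure.volume_eq_prod]
      have hswap : MeasurePreserving (Prod.swap : EuclideanSpace ℝ (Fin ℓ) × ℝ →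
          ℝ × EuclideanSpace ℝ (Fin ℓ)) (volume.prod volume) (volume.prod volume) :=
        Measure.measurePreserving_swap
      have heq : {p : EuclideanSpace ℝ (Fin ℓ) × ℝ | p.2 • p.1 ∈ N'} = Prod.swap ⁻¹' P := rfl
      rw [heq, hswap.measure_preimage hPmeas.nullMeasurableSet]
      rw [Measure.volume_eq_prod] at hPnull
      exact hPnull
    have hae : ∀ᵐ v : EuclideanSpace ℝ (Fin ℓ) ∂volume, volume {t : ℝ | t • v ∈ N'} = 0 := by
      rw [Measure.volume_eq_prod] at hQnull
      have := Measure.measure_ae_null_of_prod_null hQnull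
      filter_upwards [this] with v hv
      exact hv
    have hvol0 : (volume : Measure (EuclideanSpace ℝ (Fin ℓ))) ≠ 0 := by
      intro h
      have hpos := isOpen_univ.measure_pos (volume : Measure (EuclideanSpace ℝ (Fin ℓ)))
        univ_nonempty
      rw [h] at hpos
      simp at hpos
    haveI : (ae (volume : Measure (EuclideanSpace ℝ (Fin ℓ)))).NeBot :=
      ae_neBot.mpr hvol0
    obtain ⟨v₀, hv₀⟩ := hae.exists
    refine ⟨v₀, measure_mono_null ?_ hv₀⟩
    intro t ht
    obtain ⟨y, ⟨a, haA, rfl⟩, hyB⟩ := ht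
    rw [hAeq] at haA
    obtain ⟨_, ⟨i, rfl⟩, x, rfl⟩ := haA
    show t • v₀ ∈ N'
    refine subset_toMeasurable volume N ?_
    refine mem_iUnion.mpr ⟨i, mem_iUnion.mpr ⟨⌈‖(x : EuclideanSpace ℝ (Fin m))‖⌉₊, ?_⟩⟩
    exact ⟨x, Nat.le_ceil _, f i x + t • v₀, hyB, by abel⟩
  · -- degenerate case : m = ℓ, B is empty
    have hBempty : B = ∅ := by
      by_contra hne
      rw [← Ne, ← Set.nonempty_iff_ne_empty] at hne
      have h1 := Measure.one_le_hausdorffMeasure_zero_of_nonempty hne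
      have h2 : ((m - m : ℕ) : ℝ) = 0 := by simp
      rw [h2] at hB
      rw [hB] at h1
      exact absurd h1 (by norm_num)
    refine ⟨0, ?_⟩
    have : {t : ℝ | (((fun a => a + t • (0 : EuclideanSpace ℝ (Fin m))) '' A) ∩ B).Nonempty}
        = ∅ := by
      simp [hBempty]
    rw [this]
    simp
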